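/- arXiv:1707.07960 — 3 statements merged into one kernel-verified Lean document; each statement's English description precedes it below -/
import Mathlib

section
/- Let X and Y be topological spaces and f : X → Y, g : Y → X continuous maps. Then the mapping tori T(X, g ∘ f) and T(Y, f ∘ g) are homotopy equivalent. -/
/-- The gluing relation for the mapping torus: `(x,1) ~ (f x, 0)`. -/
inductive MappingTorusRel {X : Type*} (f : X → X) :
    X × unitInterval → X × unitInterval → Prop
  | glue (x : X) : MappingTorusRel f (x, 1) (f x, 0)

/-- The mapping torus `T(X,f) = X × [0,1] / ((x,1) ~ (f x,0))`, with the quotient topology. -/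
def MappingTorus {X : Type*} (f : X → X) : Type _ := Quot (MappingTorusRel f)

instance {X : Type*} [TopologicalSpace X] (f : X → X) : TopologicalSpace (MappingTorus f) :=
  instTopologicalSpaceQuot

open unitInterval Set

namespace MappingTorusAux

variable {X Y : Type*} [TopologicalSpace X] [TopologicalSpace Y]

/-- The quotient map onto the mapping torus. -/
abbrev mk (h : X → X) (p : X × I) : MappingTorus h := Quot.mk _ p

/-- The map induced on mapping tori by an intertwining map. -/
def torusMap (φ : C(X, Y)) (h₁ : X → X) (h₂ : Y → Y)
    (hcomm : ∀ x, φ (h₁ x) = h₂ (φ x)) : C(MappingTorus h₁, MappingTorus h₂) where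
  toFun := Quot.lift (fun p => mk h₂ (φ p.1, p.2)) (by
    rintro _ _ ⟨x⟩
    dsimp only
    rw [hcomm]
    exact Quot.sound (.glue (φ x)))
  continuous_toFun := continuous_quot_lift _
    (continuous_quot_mk.comp ((φ.continuous.comp continuous_fst).prodMk continuous_snd))

/-- The self-map `[x,s] ↦ [h x, s]` of the mapping torus. -/
def torusSelf (h : X → X) (hc : Continuous h) : C(MappingTorus h, MappingTorus h) :=
  torusMap ⟨h, hc⟩ h h (fun _ => rfl)

lemma torusSelf_mk (h : X → X) (hc : Continuous h) (p : X × I) :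
    torusSelf h hc (Quot.mk _ p) = mk h (h p.1, p.2) := rfl

/-- clamping to `[0,1]`. -/
noncomputable abbrev clamp : ℝ → I := projIcc (0 : ℝ) 1 zero_le_one

/-- The unquotiented shift homotopy. -/
noncomputable def Kraw (h : X → X) (hc : Continuous h) : C((X × I) × I, MappingTorus h) where
  toFun := fun p =>
    if p.1.2.1 + p.2.1 ≤ 1 then mk h (p.1.1, clamp (p.1.2.1 + p.2.1))
    else mk h (h p.1.1, clamp (p.1.2.1 + p.2.1 - 1))
  continuous_toFun := by
    apply Continuous.if_le
    · exact continuous_quot_mk.comp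
        ((continuous_fst.comp continuous_fst).prodMk (continuous_projIcc.comp
          ((continuous_subtype_val.comp (continuous_snd.comp continuous_fst)).add
            (continuous_subtype_val.comp continuous_snd))))
    · exact continuous_quot_mk.comp
        ((hc.comp (continuous_fst.comp continuous_fst)).prodMk
          (continuous_projIcc.comp
            (((continuous_subtype_val.comp (continuous_snd.comp continuous_fst)).add
              (continuous_subtype_val.comp continuous_snd)).sub continuous_const)))
    · exact (continuous_subtype_val.comp (continuous_snd.comp continuous_fst)).add
        (continuous_subtype_val.comp continuous_snd)
    · exact continuous_const
    · intro p hp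
      rw [hp, sub_self]
      have h1 : clamp (1 : ℝ) = 1 := by
        simp [clamp, projIcc_of_mem]
      have h0 : clamp (0 : ℝ) = 0 := by
        simp [clamp, projIcc_of_mem]
      rw [h1, h0]
      exact Quot.sound (.glue p.1.1)

lemma Kraw_respects (h : X → X) (hc : Continuous h) (t : I) :
    ∀ a b, MappingTorusRel h a b → Kraw h hc (a, t) = Kraw h hc (b, t) := by
  rintro _ _ ⟨x⟩
  simp only [Kraw, ContinuousMap.coe_mk, Icc.coe_one, Icc.coe_zero]
  have ht0 : (0 : ℝ) ≤ t.1 := t.2.1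
  have ht1 : t.1 ≤ 1 := t.2.2
  by_cases hc : (1 : ℝ) + t.1 ≤ 1
  · have ht : t.1 = 0 := le_antisymm (by linarith) ht0
    rw [if_pos hc, if_pos (by linarith : (0 : ℝ) + t.1 ≤ 1)]
    have h1 : clamp (1 + t.1) = 1 := by
      simp [clamp, ht, projIcc_of_mem]
    have h0 : clamp (0 + t.1) = 0 := by
      simp [clamp, ht, projIcc_of_mem]
    rw [h1, h0]
    exact Quot.sound (.glue x)
  · rw [if_neg hc, if_pos (by linarith : (0 : ℝ) + t.1 ≤ 1)]
    congr 2
    ring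

/-- The curried shift homotopy, descended to the torus. -/
noncomputable def Hcurry (h : X → X) (hc : Continuous h) :
    C(MappingTorus h, C(I, MappingTorus h)) where
  toFun := Quot.lift (fun p => (Kraw h hc).curry p) (by
    intro a b hab
    ext t
    exact Kraw_respects h hc t a b hab)
  continuous_toFun := continuous_quot_lift _ (Kraw h hc).curry.continuous

lemma Hcurry_mk (h : X → X) (hc : Continuous h) (p : X × I) (t : I) :
    Hcurry h hc (Quot.mk _ p) t = Kraw h hc (p, t) := by
  rfl

/-- The homotopy from the identity to the shift self-map of the mapping torus. -/
noncomputable def shiftHomotopy (h : X → X) (hc : Continuous h) :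
    ContinuousMap.Homotopy (ContinuousMap.id (MappingTorus h)) (torusSelf h hc) where
  toFun := fun p => Hcurry h hc p.2 p.1
  continuous_toFun := by
    have : Continuous fun p : MappingTorus h × I => Hcurry h hc p.1 p.2 :=
      ((Hcurry h hc).uncurry).continuous
    exact this.comp (continuous_snd.prodMk continuous_fst)
  map_zero_left := by
    apply Quot.ind
    rintro ⟨x, s⟩
    show Hcurry h hc (Quot.mk _ (x, s)) 0 = _
    rw [Hcurry_mk]
    simp only [Kraw, ContinuousMap.coe_mk, Icc.coe_zero, add_zero, ContinuousMap.id_apply]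
    rw [if_pos s.2.2]
    congr 1
    simp [clamp, projIcc_of_mem, s.2]
  map_one_left := by
    apply Quot.ind
    rintro ⟨x, s⟩
    show Hcurry h hc (Quot.mk _ (x, s)) 1 = _
    rw [Hcurry_mk, torusSelf_mk]
    simp only [Kraw, ContinuousMap.coe_mk, Icc.coe_one]
    by_cases hc : s.1 + 1 ≤ 1
    · rw [if_pos hc]
      have hs : s = 0 := by
        ext
        simp only [Icc.coe_zero]
        linarith [s.2.1]
      subst hs
      have h1 : clamp ((0 : I).1 + 1) = 1 := by
        simp [clamp, projIcc_of_mem]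
      rw [h1]
      exact Quot.sound (.glue x)
    · rw [if_neg hc]
      have hcl : clamp (s.1 + 1 - 1) = s := by
        have : s.1 + 1 - 1 = s.1 := by ring
        rw [this]
        simp [clamp, projIcc_of_mem, s.2]
      rw [hcl]

end MappingTorusAux

open MappingTorusAux in
/-- For continuous maps `f : X → Y` and `g : Y → X`, the mapping tori `T(X, g ∘ f)` and
`T(Y, f ∘ g)` are homotopy equivalent. -/
theorem mappingTorus_comp_homotopyEquiv
    {X Y : Type*} [TopologicalSpace X] [TopologicalSpace Y]
    (f : C(X, Y)) (g : C(Y, X)) :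
    Nonempty (ContinuousMap.HomotopyEquiv
      (MappingTorus (fun x => g (f x)))
      (MappingTorus (fun y => f (g y)))) := by
  refine ⟨{
    toFun := torusMap f (fun x => g (f x)) (fun y => f (g y)) (fun _ => rfl)
    invFun := torusMap g (fun y => f (g y)) (fun x => g (f x)) (fun _ => rfl)
    left_inv := ?_
    right_inv := ?_ }⟩
  · have heq : (torusMap g (fun y => f (g y)) (fun x => g (f x)) (fun _ => rfl)).comp
        (torusMap f (fun x => g (f x)) (fun y => f (g y)) (fun _ => rfl)) =
        torusSelf (fun x => g (f x)) (g.continuous.comp f.continuous) := by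
      ext p
      induction p using Quot.ind with
      | _ p =>
        simp only [ContinuousMap.comp_apply, MappingTorusAux.torusMap, torusSelf, ContinuousMap.coe_mk]
        rfl
    rw [heq]
    exact ⟨(shiftHomotopy (fun x => g (f x)) (g.continuous.comp f.continuous)).symm⟩
  · have heq : (torusMap f (fun x => g (f x)) (fun y => f (g y)) (fun _ => rfl)).comp
        (torusMap g (fun y => f (g y)) (fun x => g (f x)) (fun _ => rfl)) =
        torusSelf (fun y => f (g y)) (f.continuous.comp g.continuous) := by
      ext p
      induction p using Quot.ind with
      | _ p =>
        simp only [ContinuousMap.comp_apply, MappingTorusAux.torusMap, torusSelf, ContinuousMap.coe_mk]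
        rfl
    rw [heq]
    exact ⟨(shiftHomotopy (fun y => f (g y)) (f.continuous.comp g.continuous)).symm⟩
end

section
/- Let R be a ring, and let C₀, ..., Cₙ be finitely generated projective R-modules forming a chain complex C_* dominating a chain complex A_* via chain maps i : A_* → C_* and r : C_* → A_* with a chain homotopy s satisfying s∂ + ∂s = 1 − r∘i. Set F = C₀ ⊕ C₁ ⊕ ⋯ ⊕ Cₙ. Then the R-module endomorphism P of F given by the matrix with rows (ir, ∂, 0, ...), (isr, 1−ir, −∂, 0, ...), (is²r, −isr, ir, ∂, 0, ...), (is³r, −is²r, isr, 1−ir, −∂, ...), etc., satisfies P² = P. -/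
open DirectSum

section

variable {R : Type} [Ring R]
variable (A : ℤ → Type) [∀ k, AddCommGroup (A k)] [∀ k, Module R (A k)]
variable (C : ℤ → Type) [∀ k, AddCommGroup (C k)] [∀ k, Module R (C k)]

/-- Transport along an equality of degrees. -/
def acast : ∀ {j k : ℤ}, j = k → (A j →ₗ[R] A k)
  | _, _, rfl => LinearMap.id

variable (s : ∀ k : ℤ, A k →ₗ[R] A (k + 1))

/-- Iterates `s^m : A k → A (k+m)` of the chain homotopy `s`. -/
def spow : ∀ (m : ℕ) (k : ℤ), A k →ₗ[R] A (k + (m : ℤ))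
  | 0, k => acast A (by simp)
  | m + 1, k => acast A (by push_cast; ring) ∘ₗ s (k + (m : ℤ)) ∘ₗ spow m k

variable (dC : ∀ k : ℤ, C (k + 1) →ₗ[R] C k)
variable (i : ∀ k : ℤ, A k →ₗ[R] C k) (r : ∀ k : ℤ, C k →ₗ[R] A k)

/-- The `(a,b)` entry of Ranicki's idempotent matrix `P`:
row `a`, column `b`, with rows `(ir, ∂, 0, …)`, `(isr, 1−ir, −∂, 0, …)`,
`(is²r, −isr, ir, ∂, …)`, `(is³r, −is²r, isr, 1−ir, −∂, …)`, … . -/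
noncomputable def entry (a b : ℤ) : C b →ₗ[R] C a :=
  if h1 : a + 1 = b then
    ((-1 : ℤ) ^ a.toNat) • (dC a ∘ₗ acast C h1.symm)
  else if h2 : a = b then
    (if Even a then i a ∘ₗ r a else LinearMap.id - i a ∘ₗ r a) ∘ₗ acast C h2.symm
  else if h3 : b < a then
    ((-1 : ℤ) ^ b.toNat) •
      (i a ∘ₗ acast A (show b + ((a - b).toNat : ℤ) = a by
          rw [Int.toNat_of_nonneg (by omega)]; ring) ∘ₗ
        spow A s (a - b).toNat b ∘ₗ r b)
  else 0

-- ### cast lemmas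

lemma acast_id {k : ℤ} (h : k = k) : acast (R := R) A h = LinearMap.id := rfl

lemma acast_comp {j k l : ℤ} (h1 : j = k) (h2 : k = l) :
    acast (R := R) A h2 ∘ₗ acast A h1 = acast A (h1.trans h2) := by subst h1; subst h2; rfl

lemma acast_comp' {j k l m : ℤ} (h1 : j = k) (h2 : k = l) (f : A m →ₗ[R] A j) :
    acast (R := R) A h2 ∘ₗ (acast A h1 ∘ₗ f) = acast A (h1.trans h2) ∘ₗ f := by
  rw [← LinearMap.comp_assoc, acast_comp]

lemma acast_id_comp {k m : ℤ} (h : k = k) (f : A m →ₗ[R] A k) :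
    acast (R := R) A h ∘ₗ f = f := by rw [acast_id]; rfl

lemma spow_cast {m m' : ℕ} (h : m = m') (b : ℤ) :
    spow A s m' b = acast A (by rw [h]) ∘ₗ spow A s m b := by
  subst h; rw [acast_id]; rfl

lemma s_acast {j k : ℤ} (h : j = k) (h' : j + 1 = k + 1) :
    s k ∘ₗ acast A h = acast A h' ∘ₗ s j := by
  subst h; rfl

variable (dA : ∀ k : ℤ, A (k + 1) →ₗ[R] A k)

lemma dA_acast {j k : ℤ} (h : j = k) (h' : j + 1 = k + 1) :
    dA k ∘ₗ acast A h' = acast A h ∘ₗ dA j := by subst h; rfl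

lemma i_acast {j k : ℤ} (h : j = k) :
    i k ∘ₗ acast A h = acast C h ∘ₗ i j := by subst h; rfl

lemma r_acast {j k : ℤ} (h : j = k) :
    r k ∘ₗ acast C h = acast A h ∘ₗ r j := by subst h; rfl

-- ### normalized maps

/-- normalized iterate of `s`, from degree `b` to degree `c` (zero unless `b ≤ c`). -/
noncomputable def sA (b c : ℤ) : A b →ₗ[R] A c :=
  if h : b ≤ c then
    acast A (show b + ((c - b).toNat : ℤ) = c by
      rw [Int.toNat_of_nonneg (by omega)]; ring) ∘ₗ spow A s (c - b).toNat b
  else 0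

/-- normalized boundary of `A`, from degree `c` to degree `b` (zero unless `c = b+1`). -/
noncomputable def dAn (c b : ℤ) : A c →ₗ[R] A b :=
  if h : c = b + 1 then dA b ∘ₗ acast A h else 0

/-- normalized boundary of `C`. -/
noncomputable def dCn (c b : ℤ) : C c →ₗ[R] C b :=
  if h : c = b + 1 then dC b ∘ₗ acast C h else 0

lemma sA_refl (b : ℤ) : sA A s b b = LinearMap.id := by
  rw [sA, dif_pos le_rfl, spow_cast A s (show 0 = (b - b).toNat by omega) b]
  show acast A _ ∘ₗ (acast A _ ∘ₗ acast A _) = _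
  rw [acast_comp, acast_comp, acast_id]

lemma sA_succ {b c : ℤ} (h : b ≤ c) : sA A s b (c + 1) = s c ∘ₗ sA A s b c := by
  rw [sA, sA, dif_pos h, dif_pos (by omega : b ≤ c + 1),
    spow_cast A s (show (c - b).toNat + 1 = (c + 1 - b).toNat by omega) b]
  have hb : b + ((c - b).toNat : ℤ) = c := by rw [Int.toNat_of_nonneg (by omega)]; ring
  show acast A _ ∘ₗ (acast A _ ∘ₗ (acast A _ ∘ₗ s (b + ((c-b).toNat : ℤ)) ∘ₗ spow A s (c-b).toNat b)) = _
  rw [acast_comp', acast_comp', ← LinearMap.comp_assoc,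
    ← s_acast A s hb (show b + ((c - b).toNat : ℤ) + 1 = c + 1 by rw [hb]), LinearMap.comp_assoc]

lemma sA_one (b : ℤ) : sA A s b (b + 1) = s b := by
  rw [sA_succ A s le_rfl, sA_refl]; rfl

lemma sA_comp {a b c : ℤ} (hab : a ≤ b) (hbc : b ≤ c) :
    sA A s b c ∘ₗ sA A s a b = sA A s a c := by
  refine Int.le_induction (motive := fun c _ => sA A s b c ∘ₗ sA A s a b = sA A s a c)
    ?_ ?_ c hbc
  · show sA A s b b ∘ₗ sA A s a b = sA A s a b
    rw [sA_refl]; rfl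
  · intro c hc ih
    show sA A s b (c+1) ∘ₗ sA A s a b = sA A s a (c+1)
    rw [sA_succ A s hc, sA_succ A s (le_trans hab hc), LinearMap.comp_assoc, ih]


lemma sA_one' {b c : ℤ} (h : b + 1 = c) : sA A s b c = acast A h ∘ₗ s b := by
  subst h; rw [sA_one, acast_id]; rfl

lemma sA_comp' {a b c : ℤ} (hab : a ≤ b) (hbc : b + 1 ≤ c) :
    sA A s b c ∘ₗ sA A s a b = sA A s a c := sA_comp A s hab (by omega)

variable (dA : ∀ k : ℤ, A (k + 1) →ₗ[R] A k) in
lemma dAn_eq {c b : ℤ} (h : c = b + 1) : dAn A dA c b = dA b ∘ₗ acast A h := dif_pos h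

lemma dCn_eq {c b : ℤ} (h : c = b + 1) : dCn C dC c b = dC b ∘ₗ acast C h := dif_pos h

variable (dA : ∀ k : ℤ, A (k + 1) →ₗ[R] A k) in
lemma dAn_zero {c b : ℤ} (h : ¬ c = b + 1) : dAn A dA c b = 0 := dif_neg h

lemma dCn_zero {c b : ℤ} (h : ¬ c = b + 1) : dCn C dC c b = 0 := dif_neg h

lemma sA_zero {b c : ℤ} (h : ¬ b ≤ c) : sA A s b c = 0 := dif_neg h

section
variable (dA : ∀ k : ℤ, A (k + 1) →ₗ[R] A k)

/-- normalized chain homotopy identity -/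
lemma hs_n (hs : ∀ k : ℤ, dA k ∘ₗ s k +
      acast A (show k - 1 + 1 = k by ring) ∘ₗ s (k - 1) ∘ₗ dA (k - 1) ∘ₗ
        acast A (show k = k - 1 + 1 by ring) =
    LinearMap.id - r k ∘ₗ i k) (k : ℤ) :
    dAn A dA (k+1) k ∘ₗ sA A s k (k+1) + sA A s (k-1) k ∘ₗ dAn A dA k (k-1) =
      LinearMap.id - r k ∘ₗ i k := by
  rw [dAn_eq A dA rfl, acast_id, sA_one,
      sA_one' A s (show k - 1 + 1 = k by ring),
      dAn_eq A dA (show k = k - 1 + 1 by ring), ← hs k]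
  simp only [LinearMap.comp_id, LinearMap.comp_assoc]

/-- normalized chain-map identity for `i` -/
lemma i_dAn (hi : ∀ k, i k ∘ₗ dA k = dC k ∘ₗ i (k + 1)) (c b : ℤ) :
    i b ∘ₗ dAn A dA c b = dCn C dC c b ∘ₗ i c := by
  by_cases h : c = b + 1
  · subst h
    rw [dAn_eq A dA rfl, dCn_eq C dC rfl, acast_id, acast_id]
    show (i b ∘ₗ dA b) ∘ₗ LinearMap.id = (dC b ∘ₗ LinearMap.id) ∘ₗ i (b+1)
    rw [hi b]; rfl
  · rw [dAn_zero A dA h, dCn_zero C dC h]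
    simp

/-- normalized chain-map identity for `r` -/
lemma r_dCn (hr : ∀ k, r k ∘ₗ dC k = dA k ∘ₗ r (k + 1)) (c b : ℤ) :
    r b ∘ₗ dCn C dC c b = dAn A dA c b ∘ₗ r c := by
  by_cases h : c = b + 1
  · subst h
    rw [dAn_eq A dA rfl, dCn_eq C dC rfl, acast_id, acast_id]
    show (r b ∘ₗ dC b) ∘ₗ LinearMap.id = (dA b ∘ₗ LinearMap.id) ∘ₗ r (b+1)
    rw [hr b]; rfl
  · rw [dAn_zero A dA h, dCn_zero C dC h]
    simp

end

/-- normalized `d ∘ d = 0` for `C` -/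
lemma dCn_dCn (hdC : ∀ k, dC k ∘ₗ dC (k + 1) ∘ₗ acast C (show k + 2 = k + 1 + 1 by ring) = 0)
    (a b c : ℤ) : dCn C dC b a ∘ₗ dCn C dC c b = 0 := by
  by_cases h1 : b = a + 1
  · by_cases h2 : c = b + 1
    · subst h1; subst h2
      ext x
      have h0 : acast (R := R) C (show (a:ℤ)+2 = a+1+1 by ring)
          (acast (R := R) C (show (a:ℤ)+1+1 = a+2 by ring) x) = x := by
        have h3 := acast_comp (R := R) C (show (a:ℤ)+1+1 = a+2 by ring)
          (show (a:ℤ)+2 = a+1+1 by ring)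
        rw [acast_id] at h3
        exact LinearMap.congr_fun h3 x
      have h2' := LinearMap.congr_fun (hdC a)
        (acast (R := R) C (show (a:ℤ)+1+1 = a+2 by ring) x)
      simp only [LinearMap.comp_apply, h0, LinearMap.zero_apply] at h2'
      simp only [dCn_eq C dC rfl, acast_id, LinearMap.comp_apply, LinearMap.id_apply,
        LinearMap.zero_apply]
      exact h2'
    · rw [dCn_zero C dC h2]; simp
  · rw [dCn_zero C dC h1]; simp

-- ### entry in normalized form

lemma entry_super {a b : ℤ} (h : a + 1 = b) :
    entry A C s dC i r a b = ((-1 : ℤ) ^ a.toNat) • dCn C dC b a := by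
  rw [entry, dif_pos h, dCn_eq C dC h.symm]

lemma entry_diag (a : ℤ) :
    entry A C s dC i r a a =
      if Even a then i a ∘ₗ r a else LinearMap.id - i a ∘ₗ r a := by
  rw [entry, dif_neg (by omega), dif_pos rfl, acast_id]
  split <;> rfl

lemma entry_lt {a b : ℤ} (h : b < a) :
    entry A C s dC i r a b = ((-1 : ℤ) ^ b.toNat) • (i a ∘ₗ sA A s b a ∘ₗ r b) := by
  rw [entry, dif_neg (by omega), dif_neg (by omega), dif_pos h, sA, dif_pos (le_of_lt h)]
  rfl

lemma entry_zero {a b : ℤ} (h : a + 1 < b) : entry A C s dC i r a b = 0 := by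
  rw [entry, dif_neg (by omega), dif_neg (by omega), dif_neg (by omega)]


-- ### sign lemmas

lemma sgn_even {b : ℤ} (hb : 0 ≤ b) (h : Even b) : ((-1:ℤ)^b.toNat) = 1 := by
  apply Even.neg_one_pow
  rwa [← Int.toNat_of_nonneg hb, Int.even_coe_nat] at h

lemma sgn_odd {b : ℤ} (hb : 0 ≤ b) (h : ¬ Even b) : ((-1:ℤ)^b.toNat) = -1 := by
  apply Odd.neg_one_pow
  rwa [← Int.toNat_of_nonneg hb, Int.even_coe_nat, Nat.not_even_iff_odd] at h

lemma sgn_sq (b : ℤ) : ((-1:ℤ)^b.toNat) * ((-1:ℤ)^b.toNat) = 1 := by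
  rw [← pow_add]
  exact Even.neg_one_pow ⟨b.toNat, by ring⟩

lemma sgn_succ {a : ℤ} (ha : 0 ≤ a) : ((-1:ℤ)^(a+1).toNat) = -((-1:ℤ)^a.toNat) := by
  rw [show (a+1).toNat = a.toNat + 1 by omega, pow_succ]
  ring

-- ### telescoping sums

lemma Icc_succ_sum {M : Type} [AddCommMonoid M] {b c : ℤ} (h : b ≤ c + 1) (f : ℤ → M) :
    ∑ a ∈ Finset.Icc b (c+1), f a = (∑ a ∈ Finset.Icc b c, f a) + f (c+1) := by
  have h1 : Finset.Icc b (c+1) = insert (c+1) (Finset.Icc b c) := by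
    ext x; simp only [Finset.mem_Icc, Finset.mem_insert]; omega
  rw [h1, Finset.sum_insert (by simp only [Finset.mem_Icc]; omega)]
  exact add_comm _ _

lemma alt_telescope {M : Type} [AddCommGroup M] (Z : ℤ → M) {b c : ℤ} (hb : 0 ≤ b)
    (hbc : b ≤ c) :
    ∑ a ∈ Finset.Icc b c, ((-1:ℤ)^a.toNat) • (Z a + Z (a-1)) =
      ((-1:ℤ)^b.toNat) • Z (b-1) + ((-1:ℤ)^c.toNat) • Z c := by
  refine Int.le_induction
    (motive := fun c _ => ∑ a ∈ Finset.Icc b c, ((-1:ℤ)^a.toNat) • (Z a + Z (a-1)) =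
      ((-1:ℤ)^b.toNat) • Z (b-1) + ((-1:ℤ)^c.toNat) • Z c) ?_ ?_ c hbc
  · show ∑ a ∈ Finset.Icc b b, _ = _
    rw [Finset.Icc_self, Finset.sum_singleton, smul_add]
    abel
  · intro c hc ih
    show ∑ a ∈ Finset.Icc b (c+1), _ = _
    rw [Icc_succ_sum (by omega : b ≤ c + 1)
        (fun a => ((-1:ℤ)^a.toNat) • (Z a + Z (a-1))), ih,
      sgn_succ (by omega : (0:ℤ) ≤ c), Int.add_sub_cancel]
    simp only [neg_smul, smul_add]
    abel

lemma sgn_split {b c : ℤ} (hb : 0 ≤ b) (hbc : b ≤ c) :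
    ((-1:ℤ)^c.toNat) = ((-1:ℤ)^b.toNat) * ((-1:ℤ)^(c-b).toNat) := by
  rw [← pow_add, show b.toNat + (c-b).toNat = c.toNat by omega]

lemma sgn_sum {b c : ℤ} (hb : 0 ≤ b) (hbc : b ≤ c) :
    ∑ a ∈ Finset.Icc b c, ((-1:ℤ)^a.toNat) =
      if Even (c - b) then ((-1:ℤ)^b.toNat) else 0 := by
  refine Int.le_induction
    (motive := fun c _ => ∑ a ∈ Finset.Icc b c, ((-1:ℤ)^a.toNat) =
      if Even (c - b) then ((-1:ℤ)^b.toNat) else 0) ?_ ?_ c hbc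
  · show ∑ a ∈ Finset.Icc b b, _ = _
    rw [Finset.Icc_self, Finset.sum_singleton, if_pos (by simp)]
  · intro c hc ih
    show ∑ a ∈ Finset.Icc b (c+1), _ = _
    rw [Icc_succ_sum (by omega : b ≤ c + 1) (fun a => ((-1:ℤ)^a.toNat)), ih]
    have hsp := sgn_split hb hc
    have h1 : (c + 1 - b) = (c - b) + 1 := by ring
    by_cases hE : Even (c - b)
    · rw [if_pos hE, if_neg (by rw [h1]; simp [Int.even_add_one, hE]),
        sgn_succ (by omega : (0:ℤ) ≤ c), hsp, sgn_even (by omega) hE]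
      ring
    · rw [if_neg hE, if_pos (by rw [h1]; simpa [Int.even_add_one] using hE),
        sgn_succ (by omega : (0:ℤ) ≤ c), hsp, sgn_odd (by omega) hE]
      ring

-- ### the building blocks of the computation

variable (dA : ∀ k : ℤ, A (k + 1) →ₗ[R] A k)

/-- `i ∘ s^{c-b} ∘ r` -/
noncomputable def Sm (b c : ℤ) : C b →ₗ[R] C c := i c ∘ₗ sA A s b c ∘ₗ r b

/-- `i ∘ s^{c-a} ∘ dA ∘ s^{a+1-b} ∘ r` -/
noncomputable def Zm (b c a : ℤ) : C b →ₗ[R] C c :=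
  i c ∘ₗ sA A s a c ∘ₗ dAn A dA (a+1) a ∘ₗ sA A s b (a+1) ∘ₗ r b

lemma sA_comp_h {a b c : ℤ} (hab : a ≤ b) (hbc : b ≤ c) {M : Type} [AddCommGroup M]
    [Module R M] (f : M →ₗ[R] A a) :
    sA A s b c ∘ₗ (sA A s a b ∘ₗ f) = sA A s a c ∘ₗ f := by
  rw [← LinearMap.comp_assoc, sA_comp A s hab hbc]

section Core

variable (hs : ∀ k : ℤ, dA k ∘ₗ s k +
      acast A (show k - 1 + 1 = k by ring) ∘ₗ s (k - 1) ∘ₗ dA (k - 1) ∘ₗ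
        acast A (show k = k - 1 + 1 by ring) =
    LinearMap.id - r k ∘ₗ i k)


lemma zsmul_comp {M N P : Type} [AddCommGroup M] [AddCommGroup N] [AddCommGroup P]
    [Module R M] [Module R N] [Module R P] (z : ℤ) (f : N →ₗ[R] P) (g : M →ₗ[R] N) :
    (z • f) ∘ₗ g = z • (f ∘ₗ g) := by ext x; simp

lemma comp_zsmul {M N P : Type} [AddCommGroup M] [AddCommGroup N] [AddCommGroup P]
    [Module R M] [Module R N] [Module R P] (z : ℤ) (f : N →ₗ[R] P) (g : M →ₗ[R] N) :
    f ∘ₗ (z • g) = z • (f ∘ₗ g) := by ext x; simp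

lemma smul_comp_smul {M N P : Type} [AddCommGroup M] [AddCommGroup N] [AddCommGroup P]
    [Module R M] [Module R N] [Module R P] (z w : ℤ) (f : N →ₗ[R] P) (g : M →ₗ[R] N) :
    (z • f) ∘ₗ (w • g) = (z * w) • (f ∘ₗ g) := by ext x; simp [mul_smul]

include hs in
lemma claimA {b a c : ℤ} (hba : b ≤ a) (hac : a ≤ c) :
    i c ∘ₗ sA A s a c ∘ₗ r a ∘ₗ i a ∘ₗ sA A s b a ∘ₗ r b =
      Sm A C s i r b c - Zm A C s i r dA b c a - Zm A C s i r dA b c (a-1) := by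
  have h := hs_n A C s i r dA hs a
  have hri : r a ∘ₗ i a = LinearMap.id -
      (dAn A dA (a+1) a ∘ₗ sA A s a (a+1) + sA A s (a-1) a ∘ₗ dAn A dA a (a-1)) := by
    rw [h]; abel
  calc i c ∘ₗ sA A s a c ∘ₗ r a ∘ₗ i a ∘ₗ sA A s b a ∘ₗ r b
      = i c ∘ₗ sA A s a c ∘ₗ (r a ∘ₗ i a) ∘ₗ sA A s b a ∘ₗ r b := rfl
    _ = _ := by
        rw [hri]
        simp only [LinearMap.sub_comp, LinearMap.add_comp, LinearMap.comp_sub,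
          LinearMap.comp_add, LinearMap.id_comp, LinearMap.comp_assoc]
        rw [sA_comp_h A s hba hac (r b),
            sA_comp_h A s hba (by omega : a ≤ a + 1) (r b),
            sA_comp_h A s (by omega : a - 1 ≤ a) hac (dAn A dA a (a-1) ∘ₗ (sA A s b a ∘ₗ r b))]
        rw [Sm, Zm, Zm]
        rw [Int.sub_add_cancel]
        abel

include hs in
lemma G_mid {b a c : ℤ} (hba : b < a) (hac : a < c) :
    entry A C s dC i r c a ∘ₗ entry A C s dC i r a b =
      (((-1:ℤ)^a.toNat * (-1:ℤ)^b.toNat) : ℤ) •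
        (Sm A C s i r b c - Zm A C s i r dA b c a - Zm A C s i r dA b c (a-1)) := by
  rw [entry_lt A C s dC i r hac, entry_lt A C s dC i r hba, smul_comp_smul,
    ← claimA A C s i r dA hs (le_of_lt hba) (le_of_lt hac)]
  simp only [LinearMap.comp_assoc]

include hs in
lemma G_diagL {b c : ℤ} (hb : 0 ≤ b) (hbc : b < c) :
    entry A C s dC i r c b ∘ₗ entry A C s dC i r b b =
      if Even b then
        (Sm A C s i r b c - Zm A C s i r dA b c b - Zm A C s i r dA b c (b-1))
      else -(Zm A C s i r dA b c b + Zm A C s i r dA b c (b-1)) := by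
  have hA := claimA A C s i r dA hs (le_refl b) (le_of_lt hbc)
  rw [sA_refl] at hA
  simp only [LinearMap.id_comp] at hA
  have hSm : (i c ∘ₗ sA A s b c ∘ₗ r b) = Sm A C s i r b c := rfl
  rw [entry_lt A C s dC i r hbc, entry_diag, zsmul_comp]
  by_cases hE : Even b
  · rw [if_pos hE, if_pos hE, sgn_even hb hE, one_smul]
    simp only [LinearMap.comp_assoc]
    exact hA
  · rw [if_neg hE, if_neg hE, sgn_odd hb hE, neg_smul, one_smul]
    congr 1
    simp only [LinearMap.comp_sub, LinearMap.comp_id, LinearMap.comp_assoc]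
    rw [hA, hSm]
    abel

include hs in
lemma G_diagR {b c : ℤ} (hc : 0 ≤ c) (hbc : b < c) :
    entry A C s dC i r c c ∘ₗ entry A C s dC i r c b =
      ((-1:ℤ)^b.toNat) • (if Even c then
        (Sm A C s i r b c - Zm A C s i r dA b c c - Zm A C s i r dA b c (c-1))
      else (Zm A C s i r dA b c c + Zm A C s i r dA b c (c-1))) := by
  have hA := claimA A C s i r dA hs (le_of_lt hbc) (le_refl c)
  rw [sA_refl] at hA
  simp only [LinearMap.id_comp] at hA
  have hSm : (i c ∘ₗ sA A s b c ∘ₗ r b) = Sm A C s i r b c := rfl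
  rw [entry_lt A C s dC i r hbc, entry_diag, comp_zsmul]
  by_cases hE : Even c
  · rw [if_pos hE, if_pos hE]
    refine congrArg (fun t => ((-1:ℤ)^b.toNat) • t) ?_
    simp only [LinearMap.comp_assoc]
    exact hA
  · rw [if_neg hE, if_neg hE]
    refine congrArg (fun t => ((-1:ℤ)^b.toNat) • t) ?_
    simp only [LinearMap.sub_comp, LinearMap.id_comp, LinearMap.comp_assoc]
    rw [hA, hSm]
    abel

end Core

section Chain

variable (hi : ∀ k, i k ∘ₗ dA k = dC k ∘ₗ i (k + 1))
variable (hr : ∀ k, r k ∘ₗ dC k = dA k ∘ₗ r (k + 1))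

include hr in
lemma G_low {b c : ℤ} (h : b - 1 < c) :
    entry A C s dC i r c (b-1) ∘ₗ entry A C s dC i r (b-1) b =
      Zm A C s i r dA b c (b-1) := by
  rw [entry_lt A C s dC i r h, entry_super A C s dC i r (show b - 1 + 1 = b by ring),
    smul_comp_smul, sgn_sq, one_smul]
  simp only [LinearMap.comp_assoc]
  rw [r_dCn A C dC r dA hr b (b-1)]
  rw [Zm, Int.sub_add_cancel, sA_refl]
  simp only [LinearMap.comp_assoc, LinearMap.id_comp]

include hi in
lemma G_high {b c : ℤ} (h : b < c + 1) :
    entry A C s dC i r c (c+1) ∘ₗ entry A C s dC i r (c+1) b =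
      (((-1:ℤ)^c.toNat * (-1:ℤ)^b.toNat) : ℤ) • Zm A C s i r dA b c c := by
  rw [entry_super A C s dC i r rfl, entry_lt A C s dC i r h, smul_comp_smul]
  congr 1
  rw [← LinearMap.comp_assoc, ← i_dAn A C dC i dA hi (c+1) c]
  rw [Zm, sA_refl]
  simp only [LinearMap.comp_assoc, LinearMap.id_comp]

include hi hr in
lemma key_super {c : ℤ} (hc : 0 ≤ c) :
    entry A C s dC i r c c ∘ₗ entry A C s dC i r c (c+1) +
      entry A C s dC i r c (c+1) ∘ₗ entry A C s dC i r (c+1) (c+1) =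
        entry A C s dC i r c (c+1) := by
  have hcomm : i c ∘ₗ (r c ∘ₗ dCn C dC (c+1) c) =
      dCn C dC (c+1) c ∘ₗ (i (c+1) ∘ₗ r (c+1)) := by
    rw [r_dCn A C dC r dA hr (c+1) c, ← LinearMap.comp_assoc,
      i_dAn A C dC i dA hi (c+1) c, LinearMap.comp_assoc]
  rw [entry_super A C s dC i r rfl, entry_diag, entry_diag]
  have hE1 : (Even (c+1)) ↔ ¬ Even c := Int.even_add_one
  by_cases hE : Even c
  · rw [if_pos hE, if_neg (by simp [hE1, hE])]
    rw [comp_zsmul, zsmul_comp, ← smul_add]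
    congr 1
    simp only [LinearMap.comp_sub, LinearMap.comp_id, LinearMap.comp_assoc]
    rw [hcomm]; abel
  · rw [if_neg hE, if_pos (by simp [hE1, hE])]
    rw [comp_zsmul, zsmul_comp, ← smul_add]
    congr 1
    simp only [LinearMap.sub_comp, LinearMap.id_comp, LinearMap.comp_assoc]
    rw [hcomm]; abel

end Chain

-- ### vanishing lemmas

lemma G_vanish_low {a b c : ℤ} (h : a + 1 < b) :
    entry A C s dC i r c a ∘ₗ entry A C s dC i r a b = 0 := by
  rw [entry_zero A C s dC i r h, LinearMap.comp_zero]

lemma G_vanish_high {a b c : ℤ} (h : c + 1 < a) :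
    entry A C s dC i r c a ∘ₗ entry A C s dC i r a b = 0 := by
  rw [entry_zero A C s dC i r h, LinearMap.zero_comp]

lemma G_vanish_sub {a b c : ℤ} (hsub : Subsingleton (C a)) :
    entry A C s dC i r c a ∘ₗ entry A C s dC i r a b = 0 := by
  have h0 : entry A C s dC i r a b = 0 := by
    ext x; exact Subsingleton.elim _ _
  rw [h0, LinearMap.comp_zero]




lemma comp_sumL {ι : Type} [Fintype ι] {M N P : Type} [AddCommGroup M] [AddCommGroup N]
    [AddCommGroup P] [Module R M] [Module R N] [Module R P]
    (f : ι → (M →ₗ[R] N)) (g : N →ₗ[R] P) : g ∘ₗ (∑ a, f a) = ∑ a, g ∘ₗ f a := by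
  ext x; simp [LinearMap.sum_apply, map_sum]

lemma sum_compL {ι : Type} [Fintype ι] {M N P : Type} [AddCommGroup M] [AddCommGroup N]
    [AddCommGroup P] [Module R M] [Module R N] [Module R P]
    (f : ι → (N →ₗ[R] P)) (g : M →ₗ[R] N) : (∑ a, f a) ∘ₗ g = ∑ a, f a ∘ₗ g := by
  ext x; simp [LinearMap.sum_apply]

-- ### the key matrix identity

section Key

variable (hdC : ∀ k, dC k ∘ₗ dC (k + 1) ∘ₗ acast C (show k + 2 = k + 1 + 1 by ring) = 0)
variable (hi : ∀ k, i k ∘ₗ dA k = dC k ∘ₗ i (k + 1))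
variable (hr : ∀ k, r k ∘ₗ dC k = dA k ∘ₗ r (k + 1))
variable (hs2 : ∀ k : ℤ, dA k ∘ₗ s k +
      acast A (show k - 1 + 1 = k by ring) ∘ₗ s (k - 1) ∘ₗ dA (k - 1) ∘ₗ
        acast A (show k = k - 1 + 1 by ring) =
    LinearMap.id - r k ∘ₗ i k)

include hdC hi hr hs2 in
lemma key (b c : ℤ) (hb : 0 ≤ b) (hc : 0 ≤ c) :
    ∑ a ∈ Finset.Icc (b-1) (c+1), entry A C s dC i r c a ∘ₗ entry A C s dC i r a b =
      entry A C s dC i r c b := by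
  by_cases h1 : c + 3 ≤ b
  · rw [Finset.Icc_eq_empty (by omega), Finset.sum_empty,
      entry_zero A C s dC i r (by omega)]
  by_cases h2 : b = c + 2
  · subst h2
    rw [show (c:ℤ) + 2 - 1 = c + 1 by ring, Finset.Icc_self, Finset.sum_singleton,
      entry_super A C s dC i r rfl, entry_super A C s dC i r (show (c+1)+1 = c+2 by ring),
      smul_comp_smul, dCn_dCn C dC hdC c (c+1) (c+2), smul_zero,
      entry_zero A C s dC i r (by omega)]
  by_cases h3 : b = c + 1
  · subst h3
    rw [show (c:ℤ) + 1 - 1 = c by ring, Icc_succ_sum (by omega)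
      (fun a => entry A C s dC i r c a ∘ₗ entry A C s dC i r a (c+1)),
      Finset.Icc_self, Finset.sum_singleton]
    exact key_super A C s dC i r dA hi hr hc
  by_cases h4 : b = c
  · subst h4
    rw [show Finset.Icc (b-1) (b+1) = insert (b-1) (insert b {b+1}) from by
        ext x; simp only [Finset.mem_Icc, Finset.mem_insert, Finset.mem_singleton]; omega,
      Finset.sum_insert (by simp only [Finset.mem_insert, Finset.mem_singleton]; omega),
      Finset.sum_insert (by simp only [Finset.mem_singleton]; omega),
      Finset.sum_singleton]
    rw [G_low A C s dC i r dA hr (show b - 1 < b by omega),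
      G_high A C s dC i r dA hi (show b < b + 1 by omega), sgn_sq, one_smul]
    have hA := claimA A C s i r dA hs2 (le_refl b) (le_refl b)
    simp only [sA_refl A s, LinearMap.id_comp] at hA
    have hS : Sm A C s i r b b = i b ∘ₗ r b := by
      rw [Sm, sA_refl A s]; simp only [LinearMap.id_comp]
    rw [hS] at hA
    rw [entry_diag]
    by_cases hEb : Even b
    · rw [if_pos hEb]
      simp only [LinearMap.comp_assoc]
      rw [hA]
      abel
    · rw [if_neg hEb]
      simp only [LinearMap.comp_sub, LinearMap.sub_comp, LinearMap.comp_id,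
        LinearMap.id_comp, LinearMap.comp_assoc]
      rw [hA]
      abel
  -- now b < c
  have hbc : b < c := by omega
  have hSm : i c ∘ₗ sA A s b c ∘ₗ r b = Sm A C s i r b c := rfl
  by_cases h5 : c = b + 1
  · subst h5
    rw [show Finset.Icc (b-1) (b+1+1) = insert (b-1) (insert b (insert (b+1) {b+1+1})) from by
        ext x; simp only [Finset.mem_Icc, Finset.mem_insert, Finset.mem_singleton]; omega,
      Finset.sum_insert (by simp only [Finset.mem_insert, Finset.mem_singleton]; omega),
      Finset.sum_insert (by simp only [Finset.mem_insert, Finset.mem_singleton]; omega),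
      Finset.sum_insert (by simp only [Finset.mem_singleton]; omega),
      Finset.sum_singleton]
    rw [G_low A C s dC i r dA hr (show b - 1 < b + 1 by omega),
      G_diagL A C s dC i r dA hs2 hb hbc,
      G_diagR A C s dC i r dA hs2 (show (0:ℤ) ≤ b + 1 by omega) hbc,
      G_high A C s dC i r dA hi (show b < (b+1) + 1 by omega),
      entry_lt A C s dC i r hbc, hSm, sgn_succ hb, Int.add_sub_cancel]
    by_cases hEb : Even b
    · rw [if_pos hEb, if_neg (by simp [Int.even_add_one, hEb]),
        sgn_even hb hEb]
      simp only [one_smul, neg_smul, one_mul, mul_one, neg_mul, neg_neg, smul_add, smul_sub]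
      abel
    · rw [if_neg hEb, if_pos (by simpa [Int.even_add_one] using hEb),
        sgn_odd hb hEb]
      simp only [one_smul, neg_smul, one_mul, mul_one, neg_mul, mul_neg, neg_neg,
        smul_add, smul_sub]
      abel
  · -- b + 2 ≤ c
    have hb2 : b + 1 ≤ c - 1 := by omega
    rw [show Finset.Icc (b-1) (c+1) =
        insert (b-1) (insert b (insert c (insert (c+1) (Finset.Icc (b+1) (c-1))))) from by
        ext x; simp only [Finset.mem_Icc, Finset.mem_insert, Finset.mem_singleton]; omega,
      Finset.sum_insert (by simp only [Finset.mem_insert, Finset.mem_Icc]; omega),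
      Finset.sum_insert (by simp only [Finset.mem_insert, Finset.mem_Icc]; omega),
      Finset.sum_insert (by simp only [Finset.mem_insert, Finset.mem_Icc]; omega),
      Finset.sum_insert (by simp only [Finset.mem_Icc]; omega)]
    rw [G_low A C s dC i r dA hr (show b - 1 < c by omega),
      G_diagL A C s dC i r dA hs2 hb hbc,
      G_diagR A C s dC i r dA hs2 hc hbc,
      G_high A C s dC i r dA hi (show b < c + 1 by omega)]
    rw [Finset.sum_congr rfl (fun a ha => by
      have hmem := Finset.mem_Icc.mp ha
      exact G_mid A C s dC i r dA hs2 (show b < a by omega) (show a < c by omega))]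
    have e1 : ∀ a : ℤ, (((-1:ℤ)^a.toNat * (-1:ℤ)^b.toNat)) •
        (Sm A C s i r b c - Zm A C s i r dA b c a - Zm A C s i r dA b c (a-1)) =
        (((-1:ℤ)^a.toNat * (-1:ℤ)^b.toNat)) • Sm A C s i r b c -
          ((-1:ℤ)^b.toNat) • (((-1:ℤ)^a.toNat) •
            (Zm A C s i r dA b c a + Zm A C s i r dA b c (a-1))) := by
      intro a
      rw [smul_smul, mul_comm ((-1:ℤ)^b.toNat), smul_sub, smul_sub, smul_add]
      abel
    rw [Finset.sum_congr rfl (fun a _ => e1 a), Finset.sum_sub_distrib,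
      ← Finset.sum_smul, ← Finset.sum_mul, sgn_sum (show (0:ℤ) ≤ b + 1 by omega) hb2,
      ← Finset.smul_sum,
      alt_telescope (fun a => Zm A C s i r dA b c a) (show (0:ℤ) ≤ b + 1 by omega) hb2]
    rw [entry_lt A C s dC i r hbc, hSm, sgn_succ hb]
    have hEd : Even (c - 1 - (b+1)) ↔ (Even c ↔ Even b) := by
      rw [Int.even_sub, Int.even_sub_one, Int.even_add_one, not_iff_not]
    have hc1 : ((-1:ℤ)^(c-1).toNat) = -((-1:ℤ)^c.toNat) := by
      have h6 := sgn_succ (show (0:ℤ) ≤ c - 1 by omega)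
      rw [Int.sub_add_cancel] at h6
      linarith
    rw [hc1]
    by_cases hEb : Even b <;> by_cases hEc : Even c
    · rw [if_pos hEb, if_pos hEc, if_pos (hEd.mpr (by tauto)),
        sgn_even hb hEb, sgn_even hc hEc]
      simp only [one_smul, neg_smul, neg_neg, one_mul, mul_one, neg_mul, mul_neg,
        zero_mul, zero_smul, smul_add, smul_sub, smul_neg, neg_one_smul,
        Int.add_sub_cancel]
      abel
    · rw [if_pos hEb, if_neg hEc, if_neg (by rw [hEd]; tauto),
        sgn_even hb hEb, sgn_odd hc hEc]
      simp only [one_smul, neg_smul, neg_neg, one_mul, mul_one, neg_mul, mul_neg,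
        zero_mul, zero_smul, smul_add, smul_sub, smul_neg, neg_one_smul,
        Int.add_sub_cancel]
      abel
    · rw [if_neg hEb, if_pos hEc, if_neg (by rw [hEd]; tauto),
        sgn_odd hb hEb, sgn_even hc hEc]
      simp only [one_smul, neg_smul, neg_neg, one_mul, mul_one, neg_mul, mul_neg,
        zero_mul, zero_smul, smul_add, smul_sub, smul_neg, neg_one_smul,
        Int.add_sub_cancel]
      abel
    · rw [if_neg hEb, if_neg hEc, if_pos (hEd.mpr (by tauto)),
        sgn_odd hb hEb, sgn_odd hc hEc]
      simp only [one_smul, neg_smul, neg_neg, one_mul, mul_one, neg_mul, mul_neg,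
        zero_mul, zero_smul, smul_add, smul_sub, smul_neg, neg_one_smul,
        Int.add_sub_cancel]
      abel

include hdC hi hr hs2 in
lemma key_fin (n : ℕ) (hCbdd : ∀ k : ℤ, (k < 0 ∨ (n : ℤ) < k) → Subsingleton (C k))
    (b c : ℤ) (hb : 0 ≤ b) (hc : 0 ≤ c) :
    ∑ a ∈ Finset.Icc (0:ℤ) (n:ℤ), entry A C s dC i r c a ∘ₗ entry A C s dC i r a b =
      entry A C s dC i r c b := by
  have h1 : ∑ a ∈ Finset.Icc (0:ℤ) (n:ℤ) ∩ Finset.Icc (b-1) (c+1),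
      entry A C s dC i r c a ∘ₗ entry A C s dC i r a b =
      ∑ a ∈ Finset.Icc (0:ℤ) (n:ℤ),
      entry A C s dC i r c a ∘ₗ entry A C s dC i r a b := by
    apply Finset.sum_subset Finset.inter_subset_left
    intro x hx hnx
    by_cases hlow : x + 1 < b
    · exact G_vanish_low A C s dC i r hlow
    · refine G_vanish_high A C s dC i r ?_
      simp only [Finset.mem_inter, Finset.mem_Icc] at hx hnx
      omega
  have h2 : ∑ a ∈ Finset.Icc (0:ℤ) (n:ℤ) ∩ Finset.Icc (b-1) (c+1),
      entry A C s dC i r c a ∘ₗ entry A C s dC i r a b =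
      ∑ a ∈ Finset.Icc (b-1) (c+1),
      entry A C s dC i r c a ∘ₗ entry A C s dC i r a b := by
    apply Finset.sum_subset Finset.inter_subset_right
    intro x hx hnx
    refine G_vanish_sub A C s dC i r (hCbdd x ?_)
    simp only [Finset.mem_inter, Finset.mem_Icc] at hx hnx
    omega
  rw [← h1, h2, key A C s dC i r dA hdC hi hr hs2 b c hb hc]

end Key

end

/-- **Ranicki's idempotent.** Let `A`, `C` be chain complexes of `R`-modules with `C`
concentrated in degrees `0, …, n` and consisting of finitely generated projective modules,
`i : A → C` and `r : C → A` chain maps, and `s` a chain homotopy with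
`∂s + s∂ = 1 − r∘i` on each `A k`.  Set `F = C₀ ⊕ ⋯ ⊕ Cₙ` and let `P : F → F` be the matrix
with rows `(ir, ∂, 0, …)`, `(isr, 1−ir, −∂, 0, …)`, `(is²r, −isr, ir, ∂, …)`,
`(is³r, −is²r, isr, 1−ir, −∂, …)`, … .  Then `P² = P`. -/
theorem ranicki_projection_idempotent
    {R : Type} [Ring R] (n : ℕ)
    (A : ℤ → Type) [∀ k, AddCommGroup (A k)] [∀ k, Module R (A k)]
    (C : ℤ → Type) [∀ k, AddCommGroup (C k)] [∀ k, Module R (C k)]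
    (dA : ∀ k : ℤ, A (k + 1) →ₗ[R] A k) (dC : ∀ k : ℤ, C (k + 1) →ₗ[R] C k)
    (hdA : ∀ k, dA k ∘ₗ dA (k + 1) ∘ₗ acast A (show k + 2 = k + 1 + 1 by ring) = 0)
    (hdC : ∀ k, dC k ∘ₗ dC (k + 1) ∘ₗ acast C (show k + 2 = k + 1 + 1 by ring) = 0)
    (hCfg : ∀ k, Module.Finite R (C k)) (hCproj : ∀ k, Module.Projective R (C k))
    (hCbdd : ∀ k : ℤ, (k < 0 ∨ (n : ℤ) < k) → Subsingleton (C k))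
    (i : ∀ k : ℤ, A k →ₗ[R] C k) (r : ∀ k : ℤ, C k →ₗ[R] A k)
    (hi : ∀ k, i k ∘ₗ dA k = dC k ∘ₗ i (k + 1))
    (hr : ∀ k, r k ∘ₗ dC k = dA k ∘ₗ r (k + 1))
    (s : ∀ k : ℤ, A k →ₗ[R] A (k + 1))
    (hs : ∀ k : ℤ, dA k ∘ₗ s k +
        acast A (show k - 1 + 1 = k by ring) ∘ₗ s (k - 1) ∘ₗ dA (k - 1) ∘ₗ
          acast A (show k = k - 1 + 1 by ring) =
      LinearMap.id - r k ∘ₗ i k)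
    (P : (⨁ j : Fin (n + 1), C (j : ℤ)) →ₗ[R] (⨁ j : Fin (n + 1), C (j : ℤ)))
    (hP : P = DirectSum.toModule R (Fin (n + 1)) _ (fun b =>
      ∑ a : Fin (n + 1),
        DirectSum.lof R (Fin (n + 1)) (fun j : Fin (n + 1) => C (j : ℤ)) a ∘ₗ
          entry A C s dC i r (a : ℤ) (b : ℤ))) :
    P ∘ₗ P = P := by
  classical
  have hlof : ∀ bF : Fin (n+1),
      P ∘ₗ DirectSum.lof R (Fin (n+1)) (fun j : Fin (n+1) => C (j:ℤ)) bF =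
      ∑ a : Fin (n+1), DirectSum.lof R (Fin (n+1)) (fun j : Fin (n+1) => C (j:ℤ)) a ∘ₗ
        entry A C s dC i r (a:ℤ) (bF:ℤ) := by
    intro bF
    rw [hP]
    ext x
    simp [DirectSum.toModule_lof, LinearMap.sum_apply]
  apply DirectSum.linearMap_ext
  intro bF
  rw [LinearMap.comp_assoc, hlof bF, comp_sumL]
  have step : ∀ a : Fin (n+1),
      P ∘ₗ (DirectSum.lof R (Fin (n+1)) (fun j : Fin (n+1) => C (j:ℤ)) a ∘ₗ
        entry A C s dC i r (a:ℤ) (bF:ℤ)) =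
      ∑ e : Fin (n+1), DirectSum.lof R (Fin (n+1)) (fun j : Fin (n+1) => C (j:ℤ)) e ∘ₗ
        (entry A C s dC i r (e:ℤ) (a:ℤ) ∘ₗ entry A C s dC i r (a:ℤ) (bF:ℤ)) := by
    intro a
    rw [← LinearMap.comp_assoc, hlof a, sum_compL]
    exact Finset.sum_congr rfl (fun e _ => by rw [LinearMap.comp_assoc])
  rw [Finset.sum_congr rfl (fun a _ => step a), Finset.sum_comm]
  have hin : ∀ e : Fin (n+1),
      (∑ a : Fin (n+1), entry A C s dC i r (e:ℤ) (a:ℤ) ∘ₗ entry A C s dC i r (a:ℤ) (bF:ℤ)) =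
        entry A C s dC i r (e:ℤ) (bF:ℤ) := by
    intro e
    have hconv : (∑ a : Fin (n+1),
        entry A C s dC i r (e:ℤ) (a:ℤ) ∘ₗ entry A C s dC i r (a:ℤ) (bF:ℤ)) =
        ∑ a ∈ Finset.Icc (0:ℤ) (n:ℤ),
          entry A C s dC i r (e:ℤ) a ∘ₗ entry A C s dC i r a (bF:ℤ) := by
      rw [Fin.sum_univ_eq_sum_range
        (fun m : ℕ => entry A C s dC i r (e:ℤ) (m:ℤ) ∘ₗ entry A C s dC i r (m:ℤ) (bF:ℤ)) (n+1)]
      apply Finset.sum_nbij' (fun (a:ℕ) => (a:ℤ)) (fun (a:ℤ) => a.toNat) <;>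
        (intros; simp_all [Finset.mem_range, Finset.mem_Icc]) <;> omega
    rw [hconv]
    exact key_fin A C s dC i r dA hdC hi hr hs n hCbdd (bF:ℤ) (e:ℤ)
      (Int.natCast_nonneg _) (Int.natCast_nonneg _)
  exact Finset.sum_congr rfl (fun e _ => by rw [← comp_sumL, hin e])
end

section
/- Let R be a ring and 0 → Pₙ → Pₙ₋₁ → ⋯ → P₀ → 0 a chain complex of finitely generated projective R-modules with Hᵢ(P_*) = 0 for all i ≤ k (where k < n). Then P_* is chain homotopy equivalent to a chain complex of finitely generated projective R-modules of the form 0 → Pₙ → ⋯ → P_{k+2} → Q → 0. In particular, H_{k+1}(P_*) is a finitely generated R-module. -/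
open CategoryTheory

namespace TrAux

variable {R : Type*} [Ring R] (P : ChainComplex (ModuleCat R) ℕ)

/-- The cycles submodule in degree `j` (all of `P.X 0` when `j = 0`). -/
def Zk (j : ℕ) : Submodule R (P.X j) := LinearMap.ker (P.d j (j-1)).hom

lemma dd (a b c : ℕ) (x : P.X a) : P.d b c (P.d a b x) = 0 := by
  rw [← ModuleCat.comp_apply, P.d_comp_d]; rfl

lemma d_mem_Zk (j : ℕ) (x : P.X (j+1)) : P.d (j+1) j x ∈ Zk P j :=
  dd P (j+1) j (j-1) x

/-- `d` corestricted to the cycles. -/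
def pit (j : ℕ) : P.X (j+1) →ₗ[R] Zk P j :=
  LinearMap.codRestrict _ (P.d (j+1) j).hom (d_mem_Zk P j)

@[simp] lemma pit_coe (j : ℕ) (x : P.X (j+1)) : (pit P j x : P.X j) = P.d (j+1) j x := rfl

variable (k : ℕ) (s : ∀ j, Zk P j →ₗ[R] P.X (j+1))

/-- `id - s ∘ π` : projection onto the cycles. -/
def qraw : ∀ j, P.X j →ₗ[R] P.X j
  | 0 => LinearMap.id
  | (j+1) => LinearMap.id - (s j) ∘ₗ (pit P j)

@[simp] lemma qraw_zero : qraw P s 0 = LinearMap.id := rfl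
@[simp] lemma qraw_succ (j : ℕ) (x : P.X (j+1)) :
    qraw P s (j+1) x = x - s j (pit P j x) := rfl

lemma qraw_d' (j : ℕ) (x : P.X (j+1)) :
    qraw P s j (P.d (j+1) j x) = P.d (j+1) j x := by
  cases j with
  | zero => rfl
  | succ j =>
    rw [qraw_succ]
    have : pit P j (P.d (j+1+1) (j+1) x) = 0 := by
      apply Subtype.ext
      exact dd P (j+2) (j+1) j x
    rw [this, map_zero, sub_zero]

lemma qraw_mem (hs : ∀ j, j ≤ k → ∀ z, pit P j (s j z) = z) :
    ∀ j, j ≤ k+1 → ∀ x, qraw P s j x ∈ Zk P j := by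
  intro j hj x
  cases j with
  | zero =>
      show P.d 0 (0-1) _ = 0
      have : P.d 0 (0-1) = 0 := P.shape 0 (0-1) (by simp)
      rw [this]; rfl
  | succ j =>
      show (pit P j (qraw P s (j+1) x) : P.X j) = 0
      rw [qraw_succ, map_sub, hs j (Nat.succ_le_succ_iff.mp hj)]
      simp

/-- The homotopy components. -/
def Hmap (hs : ∀ j, j ≤ k → ∀ z, pit P j (s j z) = z) (j : ℕ) : P.X j →ₗ[R] P.X (j+1) :=
  if h : j ≤ k then
    (s j) ∘ₗ LinearMap.codRestrict (Zk P j) (qraw P s j)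
      (qraw_mem P k s hs j (h.trans (Nat.le_succ k)))
  else 0

variable (hs : ∀ j, j ≤ k → ∀ z, pit P j (s j z) = z)

lemma Hmap_of_le (j : ℕ) (h : j ≤ k) (x : P.X j) :
    Hmap P k s hs j x = s j ⟨qraw P s j x, qraw_mem P k s hs j (h.trans (Nat.le_succ k)) x⟩ := by
  rw [Hmap, dif_pos h]; rfl

lemma Hmap_of_gt (j : ℕ) (h : k < j) : Hmap P k s hs j = 0 := by
  rw [Hmap, dif_neg (Nat.not_le.mpr h)]

/-- The components of the chain map `P ⟶ Q`, as endomorphisms of `P.X j`: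
`id - (d ∘ H + H ∘ d)`. -/
def fraw (hs : ∀ j, j ≤ k → ∀ z, pit P j (s j z) = z) : ∀ j, P.X j →ₗ[R] P.X j
  | 0 => LinearMap.id - ((P.d 1 0).hom : P.X 1 →ₗ[R] P.X 0) ∘ₗ Hmap P k s hs 0
  | (j+1) => LinearMap.id -
      (((P.d (j+2) (j+1)).hom : P.X (j+2) →ₗ[R] P.X (j+1)) ∘ₗ Hmap P k s hs (j+1)
        + Hmap P k s hs j ∘ₗ ((P.d (j+1) j).hom : P.X (j+1) →ₗ[R] P.X j))

lemma fraw_zero_apply (x : P.X 0) :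
    fraw P k s hs 0 x = x - P.d 1 0 (Hmap P k s hs 0 x) := rfl

lemma fraw_succ_apply (j : ℕ) (x : P.X (j+1)) :
    fraw P k s hs (j+1) x = x - (P.d (j+2) (j+1) (Hmap P k s hs (j+1) x)
      + Hmap P k s hs j (P.d (j+1) j x)) := rfl

lemma fraw_zero_of_le : ∀ j, j ≤ k → fraw P k s hs j = 0 := by
  intro j hj
  cases j with
  | zero =>
      ext x
      rw [fraw_zero_apply, Hmap_of_le P k s hs 0 hj]
      have h1 : P.d 1 0 (s 0 ⟨qraw P s 0 x, qraw_mem P k s hs 0 (hj.trans (Nat.le_succ k)) x⟩)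
          = (pit P 0 (s 0 ⟨qraw P s 0 x, qraw_mem P k s hs 0 (hj.trans (Nat.le_succ k)) x⟩) : P.X 0) := rfl
      rw [h1, hs 0 hj]
      show x - qraw P s 0 x = 0
      simp
  | succ j =>
      ext x
      rw [fraw_succ_apply]
      have hj' : j ≤ k := (Nat.le_succ j).trans hj
      rw [Hmap_of_le P k s hs (j+1) hj, Hmap_of_le P k s hs j hj']
      have h1 : P.d (j+2) (j+1) (s (j+1) ⟨qraw P s (j+1) x, qraw_mem P k s hs (j+1) (hj.trans (Nat.le_succ k)) x⟩)
          = (pit P (j+1) (s (j+1) ⟨qraw P s (j+1) x, qraw_mem P k s hs (j+1) (hj.trans (Nat.le_succ k)) x⟩) : P.X (j+1)) := rfl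
      rw [h1, hs (j+1) hj]
      have h2 : (⟨qraw P s j (P.d (j+1) j x), qraw_mem P k s hs j (hj'.trans (Nat.le_succ k)) _⟩ : Zk P j)
          = pit P j x := by
        apply Subtype.ext
        exact qraw_d' P s j x
      rw [h2]
      show x - (qraw P s (j+1) x + s j (pit P j x)) = 0
      rw [qraw_succ]
      abel

lemma fraw_id_of_gt : ∀ j, k + 1 < j → fraw P k s hs j = LinearMap.id := by
  intro j hj
  match j, hj with
  | (j+1), hj =>
    have h1 : Hmap P k s hs (j+1) = 0 := Hmap_of_gt P k s hs (j+1) (by omega)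
    have h2 : Hmap P k s hs j = 0 := Hmap_of_gt P k s hs j (by omega)
    show LinearMap.id - _ = LinearMap.id
    rw [h1, h2]
    simp

lemma d_fraw (j : ℕ) (x : P.X (j+1)) :
    P.d (j+1) j (fraw P k s hs (j+1) x) = fraw P k s hs j (P.d (j+1) j x) := by
  have hdd : ∀ y : P.X (j+2), P.d (j+1) j (P.d (j+2) (j+1) y) = 0 := fun y =>
    dd P (j+2) (j+1) j y
  rw [fraw_succ_apply, map_sub, map_add, hdd]
  cases j with
  | zero =>
      rw [fraw_zero_apply]
      abel
  | succ j =>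
      rw [fraw_succ_apply]
      have h0 : P.d (j+1) j (P.d (j+1+1) (j+1) x) = 0 :=
        dd P (j+2) (j+1) j x
      rw [h0, map_zero, add_zero, zero_add]

lemma d_fraw_k1 (x : P.X (k+1)) :
    P.d (k+1) k (fraw P k s hs (k+1) x) = 0 := by
  rw [fraw_succ_apply, Hmap_of_gt P k s hs (k+1) (Nat.lt_succ_self k),
    LinearMap.zero_apply, map_zero, zero_add, Hmap_of_le P k s hs k le_rfl]
  have h2 : (⟨qraw P s k (P.d (k+1) k x), qraw_mem P k s hs k (Nat.le_succ k) _⟩ : Zk P k)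
      = pit P k x := by
    apply Subtype.ext
    exact qraw_d' P s k x
  rw [h2, map_sub]
  have h1 : P.d (k+1) k (s k (pit P k x)) = (pit P k (s k (pit P k x)) : P.X k) := rfl
  rw [h1, hs k le_rfl]
  simp


/-- The submodules defining the truncated complex: `⊥` in degrees `≤ k`,
`ker (d : P_{k+1} → P_k)` in degree `k+1`, and (as `ker 0 = ⊤`) everything above. -/
def Zsub (j : ℕ) : Submodule R (P.X j) :=
  if j ≤ k then ⊥ else LinearMap.ker (P.d j k).hom

lemma Zsub_of_le (j : ℕ) (h : j ≤ k) : Zsub P k j = ⊥ := if_pos h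

lemma Zsub_of_gt (j : ℕ) (h : k < j) : Zsub P k j = LinearMap.ker (P.d j k).hom :=
  if_neg (Nat.not_le.mpr h)

lemma Zsub_k1 : Zsub P k (k+1) = Zk P (k+1) := Zsub_of_gt P k (k+1) (Nat.lt_succ_self k)

lemma Zsub_of_ge (j : ℕ) (h : k + 2 ≤ j) : Zsub P k j = ⊤ := by
  rw [Zsub_of_gt P k j (by omega)]
  have : P.d j k = 0 := P.shape j k (by simp; omega)
  rw [this]
  exact LinearMap.ker_zero

lemma d_mem_Zsub (j : ℕ) : ∀ x ∈ Zsub P k (j+1), P.d (j+1) j x ∈ Zsub P k j := by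
  intro x hx
  by_cases h : j ≤ k
  · rw [Zsub_of_le P k j h]
    by_cases h' : j + 1 ≤ k
    · rw [Zsub_of_le P k (j+1) h'] at hx
      simp only [Submodule.mem_bot] at hx ⊢
      rw [hx, map_zero]
    · have hjk : j = k := by omega
      subst hjk
      rw [Zsub_k1] at hx
      exact (Submodule.mem_bot R).2 hx
  · rw [Zsub_of_gt P k j (Nat.not_le.mp h)]
    show P.d j k (P.d (j+1) j x) = 0
    exact dd P (j+1) j k x

/-- The truncated complex. -/
def Qc : ChainComplex (ModuleCat R) ℕ :=
  ChainComplex.of (fun j => ModuleCat.of R (Zsub P k j))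
    (fun j => ModuleCat.ofHom ((P.d (j+1) j).hom.restrict (d_mem_Zsub P k j)))
    (fun j => ModuleCat.hom_ext (LinearMap.ext fun x => Subtype.ext
      (dd P (j+2) (j+1) j x.1)))

lemma Qc_X (j : ℕ) : (Qc P k).X j = ModuleCat.of R (Zsub P k j) := rfl

lemma Qc_d (j : ℕ) :
    (Qc P k).d (j+1) j = ModuleCat.ofHom ((P.d (j+1) j).hom.restrict (d_mem_Zsub P k j)) :=
  ChainComplex.of_d (fun j => ModuleCat.of R (Zsub P k j))
    (fun j => ModuleCat.ofHom ((P.d (j+1) j).hom.restrict (d_mem_Zsub P k j))) j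

lemma fraw_mem_Zsub (j : ℕ) (x : P.X j) : fraw P k s hs j x ∈ Zsub P k j := by
  by_cases h : j ≤ k
  · rw [Zsub_of_le P k j h, fraw_zero_of_le P k s hs j h]
    simp
  · rw [Zsub_of_gt P k j (Nat.not_le.mp h)]
    by_cases h' : j = k + 1
    · subst h'
      exact d_fraw_k1 P k s hs x
    · show P.d j k (fraw P k s hs j x) = 0
      have : P.d j k = 0 := P.shape j k (by simp; omega)
      rw [this]
      rfl

/-- The chain map `P ⟶ Qc`. -/
def fQ : P ⟶ Qc P k where
  f j := ModuleCat.ofHom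
    (LinearMap.codRestrict (Zsub P k j) (fraw P k s hs j) (fraw_mem_Zsub P k s hs j))
  comm' := by
    rintro i j (rfl : j + 1 = i)
    rw [Qc_d]
    exact ModuleCat.hom_ext (LinearMap.ext fun x => Subtype.ext (d_fraw P k s hs j x))

/-- The chain map `Qc ⟶ P`. -/
def gQ : Qc P k ⟶ P where
  f j := ModuleCat.ofHom (Zsub P k j).subtype
  comm' := by
    rintro i j (rfl : j + 1 = i)
    rw [Qc_d]
    exact ModuleCat.hom_ext (LinearMap.ext fun x => rfl)

lemma fg_eq (i : ℕ) :
    (fQ P k s hs ≫ gQ P k).f i = (ModuleCat.ofHom (fraw P k s hs i) : P.X i ⟶ P.X i) :=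
  ModuleCat.hom_ext (LinearMap.ext fun _ => rfl)

/-- The homotopy `fQ ≫ gQ ≃ 𝟙 P`. -/
def homot1 : Homotopy (fQ P k s hs ≫ gQ P k) (𝟙 P) where
  hom i j := if h : j = i + 1 then
      (-(ModuleCat.ofHom (Hmap P k s hs i) : P.X i ⟶ P.X (i+1))) ≫ eqToHom (congrArg P.X h.symm)
    else 0
  zero i j hn := dif_neg (by
    intro hc
    exact hn (by simp [hc]))
  comm i := by
    have hrel : (ComplexShape.down ℕ).Rel (i+1) i := by simp
    have h1 : ∀ m : ℕ, (if h : m + 1 = m + 1 then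
        (-(ModuleCat.ofHom (Hmap P k s hs m) : P.X m ⟶ P.X (m+1))) ≫ eqToHom (congrArg P.X h.symm)
      else 0) = -(ModuleCat.ofHom (Hmap P k s hs m) : P.X m ⟶ P.X (m+1)) := by
      intro m
      rw [dif_pos rfl]
      simp
    rw [prevD_eq _ hrel, fg_eq, h1]
    cases i with
    | zero =>
        have h0 : (dNext 0) (fun i j => if h : j = i + 1 then
            (-(ModuleCat.ofHom (Hmap P k s hs i) : P.X i ⟶ P.X (i+1))) ≫ eqToHom (congrArg P.X h.symm)
          else 0) = 0 :=
          dNext_eq_zero _ 0 (by simp [ChainComplex.next_nat_zero])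
        rw [h0, zero_add]
        refine ModuleCat.hom_ext (LinearMap.ext fun x => ?_)
        show fraw P k s hs 0 x = P.d 1 0 (-(Hmap P k s hs 0 x)) + x
        rw [fraw_zero_apply, map_neg]
        abel
    | succ j =>
        have hrel' : (ComplexShape.down ℕ).Rel (j+1) j := by simp
        rw [dNext_eq _ hrel', h1]
        refine ModuleCat.hom_ext (LinearMap.ext fun x => ?_)
        show fraw P k s hs (j+1) x
          = -(Hmap P k s hs j (P.d (j+1) j x)) + P.d (j+2) (j+1) (-(Hmap P k s hs (j+1) x)) + x
        rw [fraw_succ_apply, map_neg]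
        abel

lemma fraw_k1_fix (x : P.X (k+1)) (hx : P.d (k+1) k x = 0) : fraw P k s hs (k+1) x = x := by
  rw [fraw_succ_apply, Hmap_of_gt P k s hs (k+1) (Nat.lt_succ_self k), LinearMap.zero_apply,
    map_zero, zero_add, hx, map_zero, sub_zero]

lemma fraw_fix (j : ℕ) (y : P.X j) (hy : y ∈ Zsub P k j) : fraw P k s hs j y = y := by
  by_cases h : j ≤ k
  · rw [Zsub_of_le P k j h] at hy
    have hx : y = 0 := by simpa using hy
    rw [hx, map_zero]
  · by_cases h' : j = k + 1
    · subst h'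
      rw [Zsub_k1] at hy
      exact fraw_k1_fix P k s hs _ hy
    · rw [fraw_id_of_gt P k s hs j (by omega)]
      rfl

lemma gf_eq : gQ P k ≫ fQ P k s hs = 𝟙 (Qc P k) := by
  apply HomologicalComplex.hom_ext
  intro j
  show ((gQ P k).f j ≫ (fQ P k s hs).f j) = 𝟙 ((Qc P k).X j)
  exact ModuleCat.hom_ext (LinearMap.ext fun (x : Zsub P k j) => Subtype.ext (fraw_fix P k s hs j x.1 x.2))

/-- `P` is homotopy equivalent to the truncated complex. -/
def homotEquiv : HomotopyEquiv P (Qc P k) :=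
  ⟨fQ P k s hs, gQ P k, homot1 P k s hs, Homotopy.ofEq (gf_eq P k s hs)⟩


lemma range_eq_ker (j : ℕ) (h : Subsingleton (P.homology j)) :
    LinearMap.range (P.d (j+1) j).hom = LinearMap.ker (P.d j (j-1)).hom := by
  have h1 : Limits.IsZero (P.homology j) := ModuleCat.isZero_of_subsingleton _
  have e := P.homologyIsoSc' (j+1) j (j-1) (by simp [ChainComplex.prev]) (by cases j <;> simp)
  have h2 : Limits.IsZero ((P.sc' (j+1) j (j-1)).homology) := h1.of_iso e.symm
  have h3 : (P.sc' (j+1) j (j-1)).Exact := (ShortComplex.exact_iff_isZero_homology _).2 h2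
  exact h3.moduleCat_range_eq_ker

lemma pit_surj (j : ℕ) (h : Subsingleton (P.homology j)) :
    Function.Surjective (pit P j) := by
  intro z
  have hz : z.1 ∈ LinearMap.range (P.d (j+1) j).hom := by
    rw [range_eq_ker P j h]
    exact z.2
  obtain ⟨x, hx⟩ := hz
  exact ⟨x, Subtype.ext hx⟩

lemma Zk_fg_proj (hfg : ∀ j, Module.Finite R (P.X j)) (hproj : ∀ j, Module.Projective R (P.X j))
    (hsurj : ∀ j, j ≤ k → Function.Surjective (pit P j)) :
    ∀ j, j ≤ k + 1 → Module.Finite R (Zk P j) ∧ Module.Projective R (Zk P j) := by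
  intro j
  induction j with
  | zero =>
      intro _
      have h0 : Zk P 0 = ⊤ := by
        have hd : P.d 0 (0-1) = 0 := P.shape _ _ (by simp)
        rw [Zk, hd]
        exact LinearMap.ker_zero
      let e : Zk P 0 ≃ₗ[R] P.X 0 := (LinearEquiv.ofEq _ _ h0).trans (Submodule.topEquiv)
      haveI := hfg 0
      haveI := hproj 0
      constructor
      · exact Module.Finite.equiv e.symm
      · exact Module.Projective.of_split e.toLinearMap e.symm.toLinearMap
          (LinearMap.ext fun x => e.symm_apply_apply x)
  | succ j ih =>
      intro hj
      have hjk : j ≤ k := by omega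
      obtain ⟨hF, hP⟩ := ih (by omega)
      haveI := hF
      haveI := hP
      haveI := hfg (j+1)
      haveI := hproj (j+1)
      obtain ⟨σ, hσ⟩ := Module.projective_lifting_property (pit P j) LinearMap.id (hsurj j hjk)
      have hmem : ∀ x : P.X (j+1), x - σ (pit P j x) ∈ Zk P (j+1) := by
        intro x
        show P.d (j+1) j _ = 0
        have hd : ∀ y : P.X (j+1), P.d (j+1) j y = (pit P j y : P.X j) := fun _ => rfl
        rw [map_sub, hd, hd (σ (pit P j x))]
        have hσ' : pit P j (σ (pit P j x)) = pit P j x := DFunLike.congr_fun hσ (pit P j x)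
        rw [hσ']
        simp
      let r : P.X (j+1) →ₗ[R] Zk P (j+1) :=
        LinearMap.codRestrict _ (LinearMap.id - σ ∘ₗ pit P j) hmem
      have hr : ∀ z : Zk P (j+1), r z.1 = z := by
        intro z
        apply Subtype.ext
        show z.1 - σ (pit P j z.1) = z.1
        have hz : pit P j z.1 = 0 := Subtype.ext (z.2 : P.d (j+1) j z.1 = 0)
        rw [hz, map_zero, sub_zero]
      constructor
      · exact Module.Finite.of_surjective r (fun z => ⟨z.1, hr z⟩)
      · exact Module.Projective.of_split (Zk P (j+1)).subtype r (LinearMap.ext hr)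

lemma Zsub_subsingleton_of_le (j : ℕ) (h : j ≤ k) : Subsingleton (Zsub P k j) := by
  constructor
  intro a b
  apply Subtype.ext
  have ha : a.1 ∈ (⊥ : Submodule R (P.X j)) := Zsub_of_le P k j h ▸ a.2
  have hb : b.1 ∈ (⊥ : Submodule R (P.X j)) := Zsub_of_le P k j h ▸ b.2
  simp only [Submodule.mem_bot] at ha hb
  rw [ha, hb]

lemma Zsub_subsingleton_of_bdd (j : ℕ) (h : Subsingleton (P.X j)) : Subsingleton (Zsub P k j) :=
  ⟨fun a b => Subtype.ext (Subsingleton.elim a.1 b.1)⟩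

/-- Linear equivalence in high degrees. -/
noncomputable def ZsubEquiv (j : ℕ) (h : k + 2 ≤ j) : Zsub P k j ≃ₗ[R] P.X j :=
  (LinearEquiv.ofEq _ _ (Zsub_of_ge P k j h)).trans Submodule.topEquiv

end TrAux

/-- Let `0 → Pₙ → ⋯ → P₀ → 0` be a chain complex of finitely generated projective `R`-modules
with `Hᵢ(P) = 0` for all `i ≤ k` (where `k < n`).  Then `P` is chain homotopy equivalent to a
chain complex of finitely generated projective modules of the form
`0 → Pₙ → ⋯ → P_{k+2} → Q → 0` (with `Q` in degree `k+1` and zeros below).  In particular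
`H_{k+1}(P)` is a finitely generated `R`-module. -/
theorem truncate_acyclic_bottom
    (R : Type*) [Ring R] (n k : ℕ) (hk : k < n) (P : ChainComplex (ModuleCat R) ℕ)
    (hbdd : ∀ j, n < j → Subsingleton (P.X j))
    (hfg : ∀ j, Module.Finite R (P.X j)) (hproj : ∀ j, Module.Projective R (P.X j))
    (hacyclic : ∀ i, i ≤ k → Subsingleton (P.homology i)) :
    (∃ Q : ChainComplex (ModuleCat R) ℕ,
      (∀ i, i ≤ k → Subsingleton (Q.X i)) ∧
      (∀ j, n < j → Subsingleton (Q.X j)) ∧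
      (∀ j, Module.Finite R (Q.X j)) ∧ (∀ j, Module.Projective R (Q.X j)) ∧
      (∀ j, k + 2 ≤ j → Nonempty ((Q.X j : Type _) ≃ₗ[R] (P.X j : Type _))) ∧
      Nonempty (HomotopyEquiv P Q)) ∧
    Module.Finite R (P.homology (k + 1)) := by
  classical
  have hsurj : ∀ j, j ≤ k → Function.Surjective (TrAux.pit P j) := fun j hj =>
    TrAux.pit_surj P j (hacyclic j hj)
  have hZ : ∀ j, j ≤ k + 1 → Module.Finite R (TrAux.Zk P j) ∧ Module.Projective R (TrAux.Zk P j) :=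
    TrAux.Zk_fg_proj P k hfg hproj hsurj
  have hsec : ∀ j, j ≤ k → ∃ σ : TrAux.Zk P j →ₗ[R] P.X (j+1), ∀ z, TrAux.pit P j (σ z) = z := by
    intro j hj
    haveI := (hZ j (hj.trans (Nat.le_succ k))).2
    obtain ⟨σ, hσ⟩ := Module.projective_lifting_property (TrAux.pit P j) LinearMap.id (hsurj j hj)
    exact ⟨σ, fun z => DFunLike.congr_fun hσ z⟩
  let s : ∀ j, TrAux.Zk P j →ₗ[R] P.X (j+1) := fun j =>
    if h : j ≤ k then (hsec j h).choose else 0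
  have hs : ∀ j, j ≤ k → ∀ z, TrAux.pit P j (s j z) = z := by
    intro j hj z
    simp only [s, dif_pos hj]
    exact (hsec j hj).choose_spec z
  constructor
  · refine ⟨TrAux.Qc P k, ?_, ?_, ?_, ?_, ?_, ⟨TrAux.homotEquiv P k s hs⟩⟩
    · intro i hi
      exact TrAux.Zsub_subsingleton_of_le P k i hi
    · intro j hj
      exact TrAux.Zsub_subsingleton_of_bdd P k j (hbdd j hj)
    · intro j
      show Module.Finite R (TrAux.Zsub P k j)
      by_cases h : j ≤ k
      · haveI := TrAux.Zsub_subsingleton_of_le P k j h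
        infer_instance
      · by_cases h' : j = k + 1
        · subst h'
          haveI := (hZ (k+1) le_rfl).1
          exact Module.Finite.equiv (LinearEquiv.ofEq _ _ (TrAux.Zsub_k1 P k).symm)
        · haveI := hfg j
          exact Module.Finite.equiv (TrAux.ZsubEquiv P k j (by omega)).symm
    · intro j
      show Module.Projective R (TrAux.Zsub P k j)
      by_cases h : j ≤ k
      · haveI := TrAux.Zsub_subsingleton_of_le P k j h
        infer_instance
      · by_cases h' : j = k + 1
        · subst h'
          haveI := (hZ (k+1) le_rfl).2
          have e := LinearEquiv.ofEq _ _ (TrAux.Zsub_k1 P k)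
          exact Module.Projective.of_split e.toLinearMap e.symm.toLinearMap
            (LinearMap.ext fun x => e.symm_apply_apply x)
        · haveI := hproj j
          have e := TrAux.ZsubEquiv P k j (by omega)
          exact Module.Projective.of_split e.toLinearMap e.symm.toLinearMap
            (LinearMap.ext fun x => e.symm_apply_apply x)
    · intro j hj
      exact ⟨TrAux.ZsubEquiv P k j hj⟩
  · haveI hfin : Module.Finite R (LinearMap.ker ((P.sc' (k+2) (k+1) k).g.hom)) := (hZ (k+1) le_rfl).1
    have e1 := P.homologyIsoSc' (k+2) (k+1) k (by simp [ChainComplex.prev]) (by simp)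
    have e2 := (P.sc' (k+2) (k+1) k).moduleCatHomologyIso
    haveI hq : Module.Finite R ((P.sc' (k+2) (k+1) k).moduleCatLeftHomologyData.H) := by
      show Module.Finite R (LinearMap.ker ((P.sc' (k+2) (k+1) k).g.hom) ⧸
        LinearMap.range ((P.sc' (k+2) (k+1) k).moduleCatToCycles))
      infer_instance
    exact Module.Finite.equiv ((e1 ≪≫ e2).symm.toLinearEquiv)
end
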